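/- A torsionless abelian group G binds itself if and only if G does not admit a surjective homomorphism onto S = ⊕_{n∈ℕ} ℤ. -/

import Mathlib

open Cardinal

theorem key_surj {ι : Type*} [LinearOrder ι] [WellFoundedLT ι]
    (A : Submodule ℤ (ι →₀ ℤ)) (hA : ℵ₀ ≤ Module.rank ℤ A) :
    ∃ g : A →ₗ[ℤ] (ℕ →₀ ℤ), Function.Surjective g := by
  classical
  set S : ι → Submodule ℤ (ι →₀ ℤ) :=
    fun i => A ⊓ Finsupp.supported ℤ ℤ {j | j ≤ i} with hS
  set I : ι → Submodule ℤ ℤ := fun i => (S i).map (Finsupp.lapply i) with hI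
  set gg : ι → ℤ := fun i => Submodule.IsPrincipal.generator (I i) with hgg
  have hgen : ∀ i, ∃ y, y ∈ S i ∧ y i = gg i := by
    intro i
    have h := Submodule.IsPrincipal.generator_mem (I i)
    rw [hI, Submodule.mem_map] at h
    obtain ⟨y, hy, hy2⟩ := h
    exact ⟨y, hy, by simpa using hy2⟩
  choose a haS hai using hgen
  have haA : ∀ i, a i ∈ A := fun i => (Submodule.mem_inf.mp (haS i)).1
  have hasupp : ∀ i, ∀ j ∈ (a i).support, j ≤ i := by
    intro i j hj
    exact (Finsupp.mem_supported ℤ (a i)).mp (Submodule.mem_inf.mp (haS i)).2 hj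
  have hmemI : ∀ i, ∀ x, x ∈ S i → ∃ c : ℤ, c * gg i = x i := by
    intro i x hx
    have : x i ∈ I i := ⟨x, hx, by simp⟩
    rw [← Submodule.IsPrincipal.span_singleton_generator (I i)] at this
    obtain ⟨c, hc⟩ := Submodule.mem_span_singleton.mp this
    exact ⟨c, by simpa using hc⟩
  set T : Set ι := {i | gg i ≠ 0} with hT
  -- spanning
  have main : ∀ i : ι, ∀ x, x ∈ A → (∀ j ∈ x.support, j ≤ i) →
      x ∈ Submodule.span ℤ (a '' T) := by
    intro i
    induction i using WellFoundedLT.induction with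
    | _ i IH =>
      intro x hxA hsupp
      rcases eq_or_ne x 0 with rfl | hx0
      · exact Submodule.zero_mem _
      have hne : x.support.Nonempty := Finsupp.support_nonempty_iff.mpr hx0
      set m := x.support.max' hne with hm
      have hmmem : m ∈ x.support := x.support.max'_mem hne
      have hmle : m ≤ i := hsupp m hmmem
      have hxS : x ∈ S m :=
        Submodule.mem_inf.mpr ⟨hxA, fun j hj => x.support.le_max' j hj⟩
      obtain ⟨c, hc⟩ := hmemI m x hxS
      have hgm : gg m ≠ 0 := by
        intro h0
        have : x m = 0 := by rw [← hc, h0, mul_zero]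
        exact (Finsupp.mem_support_iff.mp hmmem) this
      set y := x - c • a m with hy
      have hyA : y ∈ A := A.sub_mem hxA (A.smul_mem c (haA m))
      have hym : y m = 0 := by
        simp [hy, Finsupp.sub_apply, Finsupp.smul_apply, hai m, ← hc, mul_comm]
      have hysupp : ∀ j ∈ y.support, j < m := by
        intro j hj
        have hjne : j ≠ m := by
          intro h; subst h; exact Finsupp.mem_support_iff.mp hj hym
        have : j ∈ x.support ∪ (c • a m).support := by
          have := Finsupp.support_sub (f := x) (g := c • a m) hj
          simpa using this
        rcases Finset.mem_union.mp this with h | h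
        · exact lt_of_le_of_ne (x.support.le_max' j h) hjne
        · exact lt_of_le_of_ne (hasupp m j (Finsupp.support_smul h)) hjne
      have hyspan : y ∈ Submodule.span ℤ (a '' T) := by
        rcases eq_or_ne y 0 with h0 | h0
        · rw [h0]; exact Submodule.zero_mem _
        have hyne : y.support.Nonempty := Finsupp.support_nonempty_iff.mpr h0
        have hlt : y.support.max' hyne < i :=
          lt_of_lt_of_le (hysupp _ (y.support.max'_mem hyne)) hmle
        exact IH _ hlt y hyA (fun j hj => y.support.le_max' j hj)
      have hxy : x = y + c • a m := by rw [hy]; abel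
      rw [hxy]
      exact Submodule.add_mem _ hyspan
        (Submodule.smul_mem _ c (Submodule.subset_span ⟨m, hgm, rfl⟩))
  have hspan : ∀ x ∈ A, x ∈ Submodule.span ℤ (a '' T) := by
    intro x hx
    rcases eq_or_ne x 0 with rfl | hx0
    · exact Submodule.zero_mem _
    have hne : x.support.Nonempty := Finsupp.support_nonempty_iff.mpr hx0
    exact main (x.support.max' hne) x hx (fun j hj => x.support.le_max' j hj)
  -- linear independence
  have hli : LinearIndependent ℤ (fun t : T => a t) := by
    rw [linearIndependent_iff']
    intro s f hsum
    by_contra hcon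
    push_neg at hcon
    obtain ⟨t₀, ht₀s, ht₀⟩ := hcon
    set s' := s.filter (fun t => f t ≠ 0) with hs'
    have hne : s'.Nonempty := ⟨t₀, Finset.mem_filter.mpr ⟨ht₀s, ht₀⟩⟩
    set t : T := s'.max' hne with ht'
    have hts : t ∈ s := (Finset.mem_filter.mp (s'.max'_mem hne)).1
    have hft : f t ≠ 0 := (Finset.mem_filter.mp (s'.max'_mem hne)).2
    have happ : (∑ u ∈ s, f u • a u) (t : ι) = f t * gg t := by
      rw [Finsupp.finset_sum_apply]
      rw [Finset.sum_eq_single t]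
      · simp [hai t]
      · intro u hus hut
        rcases eq_or_ne (f u) 0 with h0 | h0
        · simp [h0]
        have hus' : u ∈ s' := Finset.mem_filter.mpr ⟨hus, h0⟩
        have hut' : (u : ι) < (t : ι) :=
          lt_of_le_of_ne (s'.le_max' u hus') (fun h => hut (Subtype.ext h))
        have : a u (t : ι) = 0 := by
          by_contra hz
          exact absurd (hasupp u t (Finsupp.mem_support_iff.mpr hz)) (not_le.mpr hut')
        simp [this]
      · intro h; exact absurd hts h
    rw [hsum] at happ
    have : f t * gg t ≠ 0 := mul_ne_zero hft t.2
    exact this happ.symm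
  -- basis of A
  have hliA : LinearIndependent ℤ (fun t : T => (⟨a t, haA t⟩ : A)) := by
    apply LinearIndependent.of_comp A.subtype
    exact hli
  have hspA : ⊤ ≤ Submodule.span ℤ (Set.range (fun t : T => (⟨a t, haA t⟩ : A))) := by
    intro z _
    have hz : (z : ι →₀ ℤ) ∈ Submodule.span ℤ (a '' T) := hspan _ z.2
    have himg : a '' T = A.subtype '' (Set.range (fun t : T => (⟨a t, haA t⟩ : A))) := by
      ext w
      constructor
      · rintro ⟨i, hi, rfl⟩; exact ⟨⟨a i, haA i⟩, ⟨⟨i, hi⟩, rfl⟩, rfl⟩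
      · rintro ⟨w', ⟨t, rfl⟩, rfl⟩; exact ⟨t, t.2, rfl⟩
    rw [himg, ← Submodule.map_span] at hz
    obtain ⟨w, hw, hww⟩ := hz
    have hwz : w = z := Subtype.ext hww
    exact hwz ▸ hw
  let b : Module.Basis T ℤ A := Module.Basis.mk hliA hspA
  have hTinf : Infinite T := by
    rw [Cardinal.infinite_iff]
    rw [b.mk_eq_rank'']
    exact hA
  let n : ℕ ↪ T := Infinite.natEmbedding T
  let p : T → ℕ := Function.invFun n
  have hp : Function.Surjective p := Function.invFun_surjective n.injective
  refine ⟨(Finsupp.lmapDomain ℤ ℤ p).comp b.repr.toLinearMap, ?_⟩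
  rw [← LinearMap.range_eq_top]
  rw [← top_le_iff]
  have hsingle : ∀ m : ℕ, Finsupp.single m (1 : ℤ) ∈
      LinearMap.range ((Finsupp.lmapDomain ℤ ℤ p).comp b.repr.toLinearMap) := by
    intro m
    obtain ⟨t, ht⟩ := hp m
    refine ⟨b t, ?_⟩
    simp [Module.Basis.repr_self, Finsupp.mapDomain_single, ht]
  have := (Finsupp.basisSingleOne (R := ℤ) (ι := ℕ)).span_eq
  rw [← this]
  rw [Submodule.span_le]
  rintro w ⟨m, rfl⟩
  simpa using hsingle m

def Torsionless (G : Type*) [AddCommGroup G] : Prop :=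
  ∀ g : G, g ≠ 0 → ∃ f : G →+ ℤ, f g ≠ 0

/-- `G` binds a subgroup `H` if every homomorphism from `G` to a free abelian
group maps `H` into a subgroup of finite rank. -/
def Binds.{u} {G : Type*} [AddCommGroup G] (H : AddSubgroup G) : Prop :=
  ∀ (ι : Type u) (f : G →+ (ι →₀ ℤ)), Module.rank ℤ (H.map f) < ℵ₀

theorem stmt_2.{u} {G : Type*} [AddCommGroup G] (hG : Torsionless G) :
    Binds.{u} (⊤ : AddSubgroup G) ↔
      ¬ ∃ f : G →+ (ℕ →₀ ℤ), Function.Surjective f := by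
  constructor
  · rintro hB ⟨f, hf⟩
    let e : (ℕ →₀ ℤ) ≃+ (ULift.{u} ℕ →₀ ℤ) := Finsupp.domCongr Equiv.ulift.symm
    let g : G →+ (ULift.{u} ℕ →₀ ℤ) := e.toAddMonoidHom.comp f
    have hg : Function.Surjective g := e.surjective.comp hf
    have hmap : (⊤ : AddSubgroup G).map g = ⊤ := AddSubgroup.map_top_of_surjective g hg
    have h := hB (ULift.{u} ℕ) g
    have hrank : Module.rank ℤ ((⊤ : AddSubgroup G).map g) =
        Module.rank ℤ (ULift.{u} ℕ →₀ ℤ) :=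
      LinearEquiv.rank_eq (AddEquiv.toIntLinearEquiv
        ((AddEquiv.addSubgroupCongr hmap).trans AddSubgroup.topEquiv))
    rw [hrank, rank_finsupp_self] at h
    simp at h
  · intro hns
    by_contra hB
    apply hns
    rw [Binds] at hB
    push_neg at hB
    obtain ⟨ι, f, hrk⟩ := hB
    -- well-order ι
    letI : LinearOrder ι := IsWellOrder.linearOrder WellOrderingRel
    letI : WellFoundedLT ι := ⟨by exact (WellOrderingRel.isWellOrder (α := ι)).toIsWellFounded.wf⟩
    set M : AddSubgroup (ι →₀ ℤ) := (⊤ : AddSubgroup G).map f with hM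
    set A : Submodule ℤ (ι →₀ ℤ) := AddSubgroup.toIntSubmodule M with hA
    have hAM : Module.rank ℤ M = Module.rank ℤ A :=
      LinearEquiv.rank_eq (AddEquiv.toIntLinearEquiv (AddEquiv.refl _))
    have hArank : ℵ₀ ≤ Module.rank ℤ A := by
      rw [← hAM]; exact hrk
    obtain ⟨g, hg⟩ := key_surj A hArank
    let h : G →+ A := AddMonoidHom.codRestrict f M
      (fun x => AddSubgroup.mem_map.mpr ⟨x, trivial, rfl⟩)
    have hh : Function.Surjective h := by
      rintro ⟨y, hy⟩
      obtain ⟨x, -, rfl⟩ := AddSubgroup.mem_map.mp hy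
      exact ⟨x, rfl⟩
    exact ⟨g.toAddMonoidHom.comp h, hg.comp hh⟩
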